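/- Along any Krasowskii solution of ẋ ∈ −L·K(q_Δ(x)), the deviation vector y = x − x_ave·𝟙 satisfies, for almost every t: d/dt (½‖y‖²) ≤ −λ₂(Sym(L))·‖y‖·(‖y‖ − (‖L‖/λ₂(Sym(L)))·(Δ/2)·√N). Consequently x(t) converges to the set M = {x : (1/√N)‖x − x_ave(0)𝟙‖ ≤ (‖L‖/λ₂(Sym(L)))·(Δ/2)}. -/

import Mathlib

open Matrix MeasureTheory

/-- The uniform quantizer with step `Δ`. -/
noncomputable def qd (Δ z : ℝ) : ℝ := ⌊z / Δ + 1 / 2⌋ * Δ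

/-- The Krasowskii set-valued regularization of a map between normed spaces. -/
noncomputable def kras {E F : Type*} [NormedAddCommGroup E] [NormedAddCommGroup F]
    [NormedSpace ℝ F] (f : E → F) (x : E) : Set F :=
  ⋂ δ > 0, closure (convexHull ℝ (f '' Metric.ball x δ))

/-- The Euclidean norm of a vector in `ℝ^N`. -/
noncomputable def en {N : ℕ} (v : Fin N → ℝ) : ℝ := Real.sqrt (∑ i, v i ^ 2)

lemma qd_close {Δ : ℝ} (hΔ : 0 < Δ) (z : ℝ) : |qd Δ z - z| ≤ Δ / 2 := by
  have h1 : (⌊z / Δ + 1 / 2⌋ : ℝ) ≤ z / Δ + 1 / 2 := Int.floor_le _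
  have h2 : z / Δ + 1 / 2 < ⌊z / Δ + 1 / 2⌋ + 1 := Int.lt_floor_add_one _
  have hq : qd Δ z = ⌊z / Δ + 1 / 2⌋ * Δ := rfl
  have h1' := mul_le_mul_of_nonneg_right h1 hΔ.le
  have h2' := mul_le_mul_of_nonneg_right h2.le hΔ.le
  have hz : z / Δ * Δ = z := div_mul_cancel₀ z hΔ.ne'
  rw [abs_le]
  constructor <;> rw [hq] <;> nlinarith

lemma en_eq_norm {N : ℕ} (v : Fin N → ℝ) :
    en v = ‖(WithLp.equiv 2 (Fin N → ℝ)).symm v‖ := by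
  rw [EuclideanSpace.norm_eq, en]
  congr 1
  refine Finset.sum_congr rfl fun i _ => ?_
  rw [Real.norm_eq_abs, sq_abs]; rfl

lemma en_nonneg {N : ℕ} (v : Fin N → ℝ) : 0 ≤ en v := Real.sqrt_nonneg _

lemma en_sq {N : ℕ} (v : Fin N → ℝ) : en v ^ 2 = ∑ i, v i ^ 2 :=
  Real.sq_sqrt (Finset.sum_nonneg fun i _ => sq_nonneg _)

lemma kras_close {N : ℕ} {Δ : ℝ} (hΔ : 0 < Δ) (x : Fin N → ℝ) {v : Fin N → ℝ}
    (hv : v ∈ kras (fun y i => qd Δ (y i)) x) :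
    en (fun i => v i - x i) ≤ Real.sqrt N * (Δ / 2) := by
  have key : ∀ δ > (0:ℝ), en (fun i => v i - x i) ≤ Real.sqrt N * (Δ / 2 + δ) := by
    intro δ hδ
    have hmem := Set.mem_iInter.1 hv δ
    have hmem2 := Set.mem_iInter.1 hmem hδ
    -- the closed convex set
    set e : (Fin N → ℝ) ≃L[ℝ] EuclideanSpace ℝ (Fin N) :=
      (EuclideanSpace.equiv (Fin N) ℝ).symm with he
    set D : Set (Fin N → ℝ) := e ⁻¹' Metric.closedBall (e x) (Real.sqrt N * (Δ / 2 + δ)) with hD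
    have hDconv : Convex ℝ D := by
      intro u hu w hw a b ha hb hab
      simp only [hD, Set.mem_preimage] at *
      rw [map_add, _root_.map_smul, _root_.map_smul]
      exact (convex_closedBall _ _) hu hw ha hb hab
    have hDclosed : IsClosed D := Metric.isClosed_closedBall.preimage e.continuous
    have himg : (fun y i => qd Δ (y i)) '' Metric.ball x δ ⊆ D := by
      rintro _ ⟨w, hw, rfl⟩
      simp only [hD, Set.mem_preimage, Metric.mem_closedBall, dist_eq_norm]
      have : ‖e (fun i => qd Δ (w i)) - e x‖ = en (fun i => qd Δ (w i) - x i) := by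
        rw [en_eq_norm]; rfl
      rw [this]
      have hbd : ∀ i, (qd Δ (w i) - x i) ^ 2 ≤ (Δ / 2 + δ) ^ 2 := by
        intro i
        have h1 : |qd Δ (w i) - w i| ≤ Δ / 2 := qd_close hΔ _
        have h2 : |w i - x i| < δ := by
          have := dist_le_pi_dist w x i
          rw [Real.dist_eq] at this
          exact lt_of_le_of_lt this (Metric.mem_ball.1 hw)
        have : |qd Δ (w i) - x i| ≤ Δ / 2 + δ := by
          have := abs_sub_abs_le_abs_sub (qd Δ (w i) - x i) (qd Δ (w i) - w i)
          calc |qd Δ (w i) - x i| = |(qd Δ (w i) - w i) + (w i - x i)| := by ring_nf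
            _ ≤ |qd Δ (w i) - w i| + |w i - x i| := abs_add_le _ _
            _ ≤ Δ / 2 + δ := by linarith
        calc (qd Δ (w i) - x i) ^ 2 = |qd Δ (w i) - x i| ^ 2 := (sq_abs _).symm
          _ ≤ (Δ / 2 + δ) ^ 2 := by
              have h0 : (0:ℝ) ≤ |qd Δ (w i) - x i| := abs_nonneg _
              nlinarith
      rw [en]
      calc Real.sqrt (∑ i, (qd Δ (w i) - x i) ^ 2)
          ≤ Real.sqrt (∑ _i : Fin N, (Δ / 2 + δ) ^ 2) :=
            Real.sqrt_le_sqrt (Finset.sum_le_sum fun i _ => hbd i)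
        _ = Real.sqrt N * (Δ / 2 + δ) := by
            rw [Finset.sum_const, Finset.card_univ, Fintype.card_fin, nsmul_eq_mul,
              Real.sqrt_mul (by positivity), Real.sqrt_sq (by positivity)]
    have hvD : v ∈ D :=
      closure_minimal (convexHull_min himg hDconv) hDclosed hmem2
    simpa only [hD, Set.mem_preimage, Metric.mem_closedBall, dist_eq_norm,
      show ‖e v - e x‖ = en (fun i => v i - x i) from by rw [en_eq_norm]; rfl] using hvD
  refine le_of_forall_pos_le_add fun ε hε => ?_
  by_cases hN : N = 0
  · subst hN
    simp only [en, Finset.univ_eq_empty, Finset.sum_empty, Real.sqrt_zero]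
    positivity
  · have hsN : (0:ℝ) < Real.sqrt N := Real.sqrt_pos.2 (by exact_mod_cast Nat.pos_of_ne_zero hN)
    have := key (ε / Real.sqrt N) (by positivity)
    calc en (fun i => v i - x i) ≤ Real.sqrt N * (Δ / 2 + ε / Real.sqrt N) := this
      _ = Real.sqrt N * (Δ / 2) + ε := by field_simp

lemma en_CS {N : ℕ} (a b : Fin N → ℝ) : |∑ i, a i * b i| ≤ en a * en b := by
  have h := abs_real_inner_le_norm ((WithLp.equiv 2 (Fin N → ℝ)).symm a)
    ((WithLp.equiv 2 (Fin N → ℝ)).symm b)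
  rw [← en_eq_norm, ← en_eq_norm] at h
  have : (inner ℝ ((WithLp.equiv 2 (Fin N → ℝ)).symm a) ((WithLp.equiv 2 (Fin N → ℝ)).symm b) : ℝ)
      = ∑ i, a i * b i := by
    simp only [PiLp.inner_apply, RCLike.inner_apply, conj_trivial]
    exact Finset.sum_congr rfl fun i _ => mul_comm _ _
  rwa [this] at h

section Spec
variable {N : ℕ}

lemma quad_form (A : Matrix (Fin N) (Fin N) ℝ)
    (hbal : ∀ i, ∑ j, A i j = ∑ j, A j i)
    (L : Matrix (Fin N) (Fin N) ℝ)
    (hL : L = (Matrix.diagonal fun i => ∑ j, A i j) - A) (u : Fin N → ℝ) :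
    ∑ i, u i * (L.mulVec u) i = (1/2) * ∑ i, ∑ j, A i j * (u i - u j)^2 := by
  have hmv : ∀ i, (L.mulVec u) i = (∑ j, A i j) * u i - ∑ j, A i j * u j := by
    intro i
    rw [hL, Matrix.sub_mulVec]
    simp only [Pi.sub_apply, Matrix.mulVec_diagonal]
    rfl
  have h1 : ∑ i, u i * (L.mulVec u) i
      = (∑ i, ∑ j, A i j * u i ^ 2) - ∑ i, ∑ j, A i j * (u i * u j) := by
    rw [← Finset.sum_sub_distrib]
    refine Finset.sum_congr rfl fun i _ => ?_
    rw [hmv i]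
    simp only [mul_sub, Finset.sum_mul, Finset.mul_sum, Finset.sum_sub_distrib]
    congr 1
    · exact Finset.sum_congr rfl fun j _ => by ring
    · exact Finset.sum_congr rfl fun j _ => by ring
  have h2 : ∑ i, ∑ j, A i j * (u i - u j)^2
      = ((∑ i, ∑ j, A i j * u i ^ 2) + ∑ i, ∑ j, A i j * u j ^ 2)
        - 2 * ∑ i, ∑ j, A i j * (u i * u j) := by
    rw [Finset.mul_sum, ← Finset.sum_add_distrib, ← Finset.sum_sub_distrib]
    refine Finset.sum_congr rfl fun i _ => ?_
    rw [Finset.mul_sum, ← Finset.sum_add_distrib, ← Finset.sum_sub_distrib]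
    refine Finset.sum_congr rfl fun j _ => by ring
  have h3 : ∑ i, ∑ j, A i j * u j ^ 2 = ∑ i, ∑ j, A i j * u i ^ 2 := by
    rw [Finset.sum_comm]
    refine Finset.sum_congr rfl fun j _ => ?_
    rw [← Finset.sum_mul, ← hbal j, Finset.sum_mul]
  rw [h1, h2, h3]; ring

lemma transpose_form (L : Matrix (Fin N) (Fin N) ℝ) (u : Fin N → ℝ) :
    ∑ i, u i * (Lᵀ.mulVec u) i = ∑ i, u i * (L.mulVec u) i := by
  simp only [Matrix.mulVec, dotProduct, Matrix.transpose_apply, Finset.mul_sum]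
  rw [Finset.sum_comm]
  refine Finset.sum_congr rfl fun i _ => Finset.sum_congr rfl fun j _ => by ring

lemma sym_form (L S : Matrix (Fin N) (Fin N) ℝ) (hS : S = (1 / 2 : ℝ) • (L + Lᵀ))
    (u : Fin N → ℝ) :
    ∑ i, u i * (S.mulVec u) i = ∑ i, u i * (L.mulVec u) i := by
  have : ∀ i, (S.mulVec u) i = (1/2) * ((L.mulVec u) i + (Lᵀ.mulVec u) i) := by
    intro i
    simp only [hS, Matrix.smul_mulVec, Matrix.add_mulVec, Pi.smul_apply, Pi.add_apply,
      smul_eq_mul]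
  calc ∑ i, u i * (S.mulVec u) i
      = (1/2) * (∑ i, u i * (L.mulVec u) i + ∑ i, u i * (Lᵀ.mulVec u) i) := by
        rw [← Finset.sum_add_distrib, Finset.mul_sum]
        exact Finset.sum_congr rfl fun i _ => by rw [this i]; ring
    _ = ∑ i, u i * (L.mulVec u) i := by rw [transpose_form]; ring

lemma S_hermitian (L S : Matrix (Fin N) (Fin N) ℝ) (hS : S = (1 / 2 : ℝ) • (L + Lᵀ)) :
    S.IsHermitian := by
  subst hS
  unfold Matrix.IsHermitian
  rw [Matrix.conjTranspose_eq_transpose_of_trivial, Matrix.transpose_smul,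
    Matrix.transpose_add, Matrix.transpose_transpose, add_comm]

lemma ker_const (A : Matrix (Fin N) (Fin N) ℝ)
    (hA : ∀ i j, 0 ≤ A i j)
    (hbal : ∀ i, ∑ j, A i j = ∑ j, A j i)
    (hconn : ∀ i j : Fin N,
      Relation.ReflTransGen (fun a b => A a b ≠ 0 ∨ A b a ≠ 0) i j)
    (L : Matrix (Fin N) (Fin N) ℝ)
    (hL : L = (Matrix.diagonal fun i => ∑ j, A i j) - A)
    (S : Matrix (Fin N) (Fin N) ℝ) (hS : S = (1 / 2 : ℝ) • (L + Lᵀ))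
    (v : Fin N → ℝ) (hv : S.mulVec v = 0) : ∀ i j, v i = v j := by
  have h0 : ∑ i, v i * (S.mulVec v) i = 0 := by
    rw [hv]; simp
  rw [sym_form L S hS, quad_form A hbal L hL] at h0
  have hterm : ∀ i ∈ Finset.univ, ∀ j ∈ Finset.univ, (0:ℝ) ≤ A i j * (v i - v j)^2 :=
    fun i _ j _ => mul_nonneg (hA i j) (sq_nonneg _)
  have hz : ∀ i ∈ Finset.univ, ∀ j ∈ Finset.univ, A i j * (v i - v j)^2 = 0 := by
    have hsum : ∑ i, ∑ j, A i j * (v i - v j)^2 = 0 := by linarith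
    have := (Finset.sum_eq_zero_iff_of_nonneg
      (fun i _ => Finset.sum_nonneg (fun j _ => hterm i (Finset.mem_univ i) j (Finset.mem_univ j)))).1 hsum
    intro i hi j hj
    exact (Finset.sum_eq_zero_iff_of_nonneg (fun j hj => hterm i hi j hj)).1 (this i hi) j hj
  have hadj : ∀ i j, A i j ≠ 0 → v i = v j := by
    intro i j hne
    have := hz i (Finset.mem_univ i) j (Finset.mem_univ j)
    rcases mul_eq_zero.1 this with h | h
    · exact absurd h hne
    · have := pow_eq_zero_iff (n := 2) (by norm_num) |>.1 h
      linarith [sub_eq_zero.1 this]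
  intro i j
  induction hconn i j with
  | refl => rfl
  | tail _ hstep ih =>
      rcases hstep with h | h
      · exact ih.trans (hadj _ _ h)
      · exact ih.trans (hadj _ _ h).symm  -- careful direction
end Spec

lemma spec_bound {N : ℕ} (hN : 0 < N) (S : Matrix (Fin N) (Fin N) ℝ)
    (hsym : S.IsHermitian) (lam2 : ℝ)
    (hlow : ∀ μ : ℝ, μ ≠ 0 → (∃ v : Fin N → ℝ, v ≠ 0 ∧ S.mulVec v = μ • v) → lam2 ≤ μ)
    (hker : ∀ v : Fin N → ℝ, S.mulVec v = 0 → ∀ i j, v i = v j)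
    (u : Fin N → ℝ) (hu : ∑ i, u i = 0) :
    lam2 * ∑ i, u i ^ 2 ≤ ∑ i, u i * (S.mulVec u) i := by
  classical
  set b := hsym.eigenvectorBasis with hb
  set lam := hsym.eigenvalues with hlamdef
  set u' : EuclideanSpace ℝ (Fin N) := WithLp.toLp 2 u with hu'
  set c : Fin N → ℝ := fun i => inner ℝ (b i) u' with hc
  have hc' : ∀ i, c i = ∑ k, b i k * u k := by
    intro i
    simp only [hc, PiLp.inner_apply, RCLike.inner_apply, conj_trivial]
    exact Finset.sum_congr rfl fun k _ => mul_comm _ _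
  have horth : ∀ i j, ∑ k, b i k * b j k = if i = j then 1 else 0 := by
    intro i j
    have h := orthonormal_iff_ite.1 b.orthonormal i j
    rw [← h]
    simp only [PiLp.inner_apply, RCLike.inner_apply, conj_trivial]
    exact Finset.sum_congr rfl fun k _ => mul_comm _ _
  have hexp : ∀ k, u k = ∑ i, c i * b i k := by
    intro k
    have hrepr := b.sum_repr' u'
    have h := congrArg (fun z : EuclideanSpace ℝ (Fin N) => z k) hrepr
    simp only at h
    have hsplit : (∑ i, (inner ℝ (b i) u' : ℝ) • b i : EuclideanSpace ℝ (Fin N)) k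
        = ∑ i, c i * b i k := by
      rw [WithLp.ofLp_sum]
      refine (Finset.sum_apply k Finset.univ _).trans ?_
      rfl
    exact (h.symm.trans hsplit : u' k = _)
  have hnorm : ∑ i, u i ^ 2 = ∑ i, c i ^ 2 := by
    have h1 := b.sum_inner_mul_inner u' u'
    have h2 : (inner ℝ u' u' : ℝ) = ∑ i, u i ^ 2 := by
      simp only [PiLp.inner_apply, RCLike.inner_apply, conj_trivial]
      exact Finset.sum_congr rfl fun i _ => (pow_two (u i)).symm ▸ rfl
    rw [← h2, ← h1]
    refine Finset.sum_congr rfl fun i _ => ?_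
    rw [real_inner_comm (b i) u']
    exact (pow_two (c i)).symm
  have hSb : ∀ i k, ∑ m, S k m * b i m = lam i * b i k := by
    intro i k
    have h := hsym.mulVec_eigenvectorBasis i
    have h2 := congrFun h k
    simpa [Matrix.mulVec, dotProduct] using h2
  have hmvu : ∀ k, (S.mulVec u) k = ∑ i, c i * (lam i * b i k) := by
    intro k
    calc (S.mulVec u) k = ∑ m, S k m * u m := rfl
      _ = ∑ m, S k m * ∑ i, c i * b i m :=
          Finset.sum_congr rfl fun m _ => by rw [← hexp m]
      _ = ∑ m, ∑ i, c i * (S k m * b i m) := by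
          refine Finset.sum_congr rfl fun m _ => ?_
          rw [Finset.mul_sum]
          exact Finset.sum_congr rfl fun i _ => by ring
      _ = ∑ i, ∑ m, c i * (S k m * b i m) := Finset.sum_comm
      _ = ∑ i, c i * (lam i * b i k) := by
          refine Finset.sum_congr rfl fun i _ => ?_
          rw [← Finset.mul_sum, hSb i k]
  have hquad : ∑ k, u k * (S.mulVec u) k = ∑ i, lam i * c i ^ 2 := by
    calc ∑ k, u k * (S.mulVec u) k
        = ∑ k, (∑ j, c j * b j k) * (∑ i, c i * (lam i * b i k)) :=
          Finset.sum_congr rfl fun k _ => by rw [← hexp k, hmvu k]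
      _ = ∑ k, ∑ j, ∑ i, (c j * b j k) * (c i * (lam i * b i k)) :=
          Finset.sum_congr rfl fun k _ => by rw [Finset.sum_mul_sum]
      _ = ∑ j, ∑ k, ∑ i, (c j * b j k) * (c i * (lam i * b i k)) := Finset.sum_comm
      _ = ∑ j, ∑ i, ∑ k, (c j * b j k) * (c i * (lam i * b i k)) :=
          Finset.sum_congr rfl fun j _ => Finset.sum_comm
      _ = ∑ j, ∑ i, (c j * c i * lam i) * ∑ k, b j k * b i k := by
          refine Finset.sum_congr rfl fun j _ => Finset.sum_congr rfl fun i _ => ?_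
          rw [Finset.mul_sum]
          exact Finset.sum_congr rfl fun k _ => by ring
      _ = ∑ j, lam j * c j ^ 2 := by
          refine Finset.sum_congr rfl fun j _ => ?_
          rw [Finset.sum_eq_single j]
          · rw [horth j j, if_pos rfl]; ring
          · intro i _ hij
            rw [horth j i, if_neg (fun h => hij h.symm), mul_zero]
          · intro h; exact absurd (Finset.mem_univ j) h
  have hper : ∀ i, lam2 * c i ^ 2 ≤ lam i * c i ^ 2 := by
    intro i
    rcases eq_or_ne (c i) 0 with h0 | h0
    · simp [h0]
    · have hne : lam i ≠ 0 := by
        intro hz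
        have hk : S.mulVec (fun m => b i m) = 0 := by
          funext k
          show ∑ m, S k m * b i m = 0
          rw [hSb i k, hz, zero_mul]
        have hcst := hker _ hk
        have : c i = b i ⟨0, hN⟩ * ∑ k, u k := by
          rw [hc' i, Finset.mul_sum]
          exact Finset.sum_congr rfl fun k _ => by rw [hcst k ⟨0, hN⟩]
        rw [this, hu, mul_zero] at h0
        exact h0 rfl
      have hbne : (fun m => b i m) ≠ (0 : Fin N → ℝ) := by
        intro hz
        have hzz : ∀ m, b i m = 0 := fun m => congrFun hz m
        have hn : ‖b i‖ = 1 := b.orthonormal.1 i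
        rw [EuclideanSpace.norm_eq] at hn
        simp [hzz] at hn
      have hge : lam2 ≤ lam i := by
        refine hlow _ hne ⟨fun m => b i m, hbne, ?_⟩
        funext k
        show ∑ m, S k m * b i m = _
        rw [hSb i k]
        rfl
      have := sq_nonneg (c i)
      nlinarith
  calc lam2 * ∑ i, u i ^ 2 = ∑ i, lam2 * c i ^ 2 := by rw [hnorm, Finset.mul_sum]
    _ ≤ ∑ i, lam i * c i ^ 2 := Finset.sum_le_sum fun i _ => hper i
    _ = ∑ k, u k * (S.mulVec u) k := hquad.symm

lemma sq_integral_eq {t : ℝ} (f : ℝ → ℝ) (hf : IntegrableOn f (Set.Ioc 0 t)) :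
    (∫ s in Set.Ioc 0 t, f s) ^ 2
      = 2 * ∫ s in Set.Ioc 0 t, f s * ∫ u in Set.Ioc 0 s, f u := by
  classical
  set A : Set ℝ := Set.Ioc 0 t with hA
  set μ : Measure ℝ := volume.restrict A with hμ
  have hfμ : Integrable f μ := hf
  set Φ : ℝ × ℝ → ℝ := fun p => f p.1 * f p.2 with hΦ
  have hΦint : Integrable Φ (μ.prod μ) := hfμ.mul_prod hfμ
  set k : ℝ × ℝ → ℝ := fun p => Set.indicator {p : ℝ × ℝ | p.2 ≤ p.1} Φ p with hk
  set k' : ℝ × ℝ → ℝ := fun p => Set.indicator {p : ℝ × ℝ | p.1 ≤ p.2} Φ p with hk'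
  have hmeas : MeasurableSet {p : ℝ × ℝ | p.2 ≤ p.1} :=
    measurableSet_le measurable_snd measurable_fst
  have hmeas' : MeasurableSet {p : ℝ × ℝ | p.1 ≤ p.2} :=
    measurableSet_le measurable_fst measurable_snd
  have hkint : Integrable k (μ.prod μ) := hΦint.indicator hmeas
  have hkint' : Integrable k' (μ.prod μ) := hΦint.indicator hmeas'
  have hswap_meas : Measure.map Prod.swap (μ.prod μ) = μ.prod μ := Measure.prod_swap
  have hswap : ∫ p, k p ∂(μ.prod μ) = ∫ p, k' p ∂(μ.prod μ) := by
    calc ∫ p, k p ∂(μ.prod μ) = ∫ p, k p ∂(Measure.map Prod.swap (μ.prod μ)) := by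
          rw [hswap_meas]
      _ = ∫ p, k (Prod.swap p) ∂(μ.prod μ) :=
          integral_map measurable_swap.aemeasurable (by rw [hswap_meas]; exact hkint.1)
      _ = ∫ p, k' p ∂(μ.prod μ) := by
          refine integral_congr_ae (Filter.Eventually.of_forall fun p => ?_)
          show Set.indicator {q : ℝ × ℝ | q.2 ≤ q.1} Φ p.swap
            = Set.indicator {q : ℝ × ℝ | q.1 ≤ q.2} Φ p
          by_cases h : p.1 ≤ p.2
          · rw [Set.indicator_of_mem (s := {q : ℝ × ℝ | q.2 ≤ q.1}) h,
              Set.indicator_of_mem (s := {q : ℝ × ℝ | q.1 ≤ q.2}) h]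
            show f p.2 * f p.1 = f p.1 * f p.2
            ring
          · rw [Set.indicator_of_notMem (s := {q : ℝ × ℝ | q.2 ≤ q.1}) h,
              Set.indicator_of_notMem (s := {q : ℝ × ℝ | q.1 ≤ q.2}) h]
  have hdiag : ∫ p, Set.indicator {p : ℝ × ℝ | p.1 = p.2} Φ p ∂(μ.prod μ) = 0 := by
    have hdm : MeasurableSet {p : ℝ × ℝ | p.1 = p.2} :=
      measurableSet_eq_fun measurable_fst measurable_snd
    have hnull : (μ.prod μ) {p : ℝ × ℝ | p.1 = p.2} = 0 := by
      rw [Measure.prod_apply hdm]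
      have : ∀ x : ℝ, μ (Prod.mk x ⁻¹' {p : ℝ × ℝ | p.1 = p.2}) = 0 := by
        intro x
        have hpre : Prod.mk x ⁻¹' {p : ℝ × ℝ | p.1 = p.2} = {x} := by
          ext z; simp [eq_comm]
        rw [hpre, hμ, Measure.restrict_apply (measurableSet_singleton x)]
        exact measure_mono_null Set.inter_subset_left Real.volume_singleton
      simp [this]
    have h0 : (Set.indicator {p : ℝ × ℝ | p.1 = p.2} Φ : ℝ × ℝ → ℝ) =ᵐ[μ.prod μ] 0 := by
      filter_upwards [(ae_iff (p := fun p => ¬ p ∈ {p : ℝ × ℝ | p.1 = p.2})).2 (by simpa using hnull)] with p hp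
      simpa using Set.indicator_of_notMem (s := {p : ℝ × ℝ | p.1 = p.2}) hp Φ
    rw [integral_congr_ae h0]
    simp
  have hsum : (∫ p, k p ∂(μ.prod μ)) + ∫ p, k' p ∂(μ.prod μ)
      = (∫ p, Φ p ∂(μ.prod μ))
        + ∫ p, Set.indicator {p : ℝ × ℝ | p.1 = p.2} Φ p ∂(μ.prod μ) := by
    rw [← integral_add hkint hkint', ← integral_add hΦint
      (hΦint.indicator (measurableSet_eq_fun measurable_fst measurable_snd))]
    refine integral_congr_ae (Filter.Eventually.of_forall fun p => ?_)
    rcases lt_trichotomy p.1 p.2 with h | h | h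
    · simp [hk, hk', Set.indicator_apply, not_le.2 h, le_of_lt h, h.ne]
    · simp [hk, hk', Set.indicator_apply, le_of_eq h, le_of_eq h.symm, h]
    · simp [hk, hk', Set.indicator_apply, not_le.2 h, le_of_lt h, h.ne']
  have hwhole : ∫ p, Φ p ∂(μ.prod μ) = (∫ s in Set.Ioc 0 t, f s) ^ 2 := by
    rw [hΦ]
    rw [integral_prod_mul f f]
    rw [pow_two, hμ]
  have hk_fub : ∫ p, k p ∂(μ.prod μ)
      = ∫ s in Set.Ioc 0 t, f s * ∫ u in Set.Ioc 0 s, f u := by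
    rw [integral_prod _ hkint, hμ]
    refine setIntegral_congr_fun measurableSet_Ioc fun s hs => ?_
    have h1 : ∀ u : ℝ, k (s, u) = (Set.Iic s).indicator (fun u => f s * f u) u := by
      intro u
      show Set.indicator {q : ℝ × ℝ | q.2 ≤ q.1} Φ (s, u) = _
      by_cases hu : u ≤ s
      · rw [Set.indicator_of_mem (s := {q : ℝ × ℝ | q.2 ≤ q.1}) hu,
          Set.indicator_of_mem (Set.mem_Iic.2 hu)]
      · rw [Set.indicator_of_notMem (s := {q : ℝ × ℝ | q.2 ≤ q.1}) hu,
          Set.indicator_of_notMem (fun hc => hu (Set.mem_Iic.1 hc))]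
    calc ∫ u, k (s, u) ∂μ = ∫ u, (Set.Iic s).indicator (fun u => f s * f u) u ∂μ := by
          exact integral_congr_ae (Filter.Eventually.of_forall h1)
      _ = ∫ u in Set.Iic s, f s * f u ∂μ := integral_indicator measurableSet_Iic
      _ = ∫ u in Set.Ioc 0 s, f s * f u := by
          rw [hμ, Measure.restrict_restrict measurableSet_Iic]
          have hset : Set.Iic s ∩ A = Set.Ioc 0 s := by
            rw [hA]
            ext z
            constructor
            · rintro ⟨ha, hb, hc⟩; exact ⟨hb, ha⟩
            · rintro ⟨ha, hb⟩; exact ⟨hb, ha, hb.trans hs.2⟩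
          rw [hset]
      _ = f s * ∫ u in Set.Ioc 0 s, f u := integral_const_mul _ _
  have : 2 * ∫ p, k p ∂(μ.prod μ) = (∫ s in Set.Ioc 0 t, f s) ^ 2 := by
    rw [two_mul]
    nth_rewrite 2 [hswap]
    rw [hsum, hdiag, hwhole, add_zero]
  rw [← hk_fub, this]

lemma primitive_sq (c : ℝ) (f' : ℝ → ℝ)
    (h : ∀ t, 0 ≤ t → IntegrableOn f' (Set.Ioc 0 t)) {t : ℝ} (ht : 0 ≤ t) :
    (c + ∫ s in Set.Ioc 0 t, f' s) ^ 2
      = c ^ 2 + 2 * ∫ s in Set.Ioc 0 t, f' s * (c + ∫ u in Set.Ioc 0 s, f' u) := by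
  have hF : ContinuousOn (fun s => ∫ u in Set.Ioc 0 s, f' u) (Set.Icc 0 t) :=
    intervalIntegral.continuousOn_primitive ((integrableOn_Icc_iff_integrableOn_Ioc).2 (h t ht))
  have hint1 : IntegrableOn (fun s => f' s * (∫ u in Set.Ioc 0 s, f' u)) (Set.Ioc 0 t) := by
    have hfIcc := (integrableOn_Icc_iff_integrableOn_Ioc).2 (h t ht)
    have := hfIcc.mul_continuousOn hF isCompact_Icc
    exact this.mono_set Set.Ioc_subset_Icc_self
  have hint2 : IntegrableOn (fun s => f' s * c) (Set.Ioc 0 t) := (h t ht).mul_const c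
  have hsplit : ∫ s in Set.Ioc 0 t, f' s * (c + ∫ u in Set.Ioc 0 s, f' u)
      = (∫ s in Set.Ioc 0 t, f' s * c)
        + ∫ s in Set.Ioc 0 t, f' s * (∫ u in Set.Ioc 0 s, f' u) := by
    rw [← integral_add hint2 hint1]
    refine integral_congr_ae (Filter.Eventually.of_forall fun s => ?_)
    ring
  have hsq := sq_integral_eq f' (h t ht)
  have hc : ∫ s in Set.Ioc 0 t, f' s * c = c * ∫ s in Set.Ioc 0 t, f' s := by
    rw [← integral_const_mul]
    exact integral_congr_ae (Filter.Eventually.of_forall fun s => by ring)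
  rw [hsplit, hc]
  nlinarith [hsq]
set_option maxHeartbeats 2000000 in
/-- along any Krasowskii solution of `ẋ ∈ −L·K(q_Δ)(x)` the
deviation `y = x − x_ave 𝟙` satisfies, for a.e. `t ≥ 0`, the Lyapunov decay
`d/dt (½‖y‖²) ≤ −λ₂(Sym L)·‖y‖·(‖y‖ − (‖L‖/λ₂(Sym L))·(Δ/2)·√N)`, and
consequently `x(t)` converges to the set
`M = {x : (1/√N)‖x − x_ave(0)𝟙‖ ≤ (‖L‖/λ₂(Sym L))·Δ/2}`. -/
theorem krasowskii_convergence (N : ℕ) (Δ : ℝ) (hΔ : 0 < Δ)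
    (A : Matrix (Fin N) (Fin N) ℝ)
    (hA : ∀ i j, 0 ≤ A i j) (hdiag : ∀ i, A i i = 0)
    (hbal : ∀ i, ∑ j, A i j = ∑ j, A j i)
    (hconn : ∀ i j : Fin N,
      Relation.ReflTransGen (fun a b => A a b ≠ 0 ∨ A b a ≠ 0) i j)
    (L : Matrix (Fin N) (Fin N) ℝ)
    (hL : L = (Matrix.diagonal fun i => ∑ j, A i j) - A)
    (S : Matrix (Fin N) (Fin N) ℝ) (hS : S = (1 / 2 : ℝ) • (L + Lᵀ))
    (lam2 : ℝ)
    (hlam : IsLeast {μ : ℝ | μ ≠ 0 ∧ ∃ v : Fin N → ℝ, v ≠ 0 ∧ S.mulVec v = μ • v} lam2)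
    (CL : ℝ)
    (hCL : IsLeast {c : ℝ | 0 ≤ c ∧ ∀ v : Fin N → ℝ, en (L.mulVec v) ≤ c * en v} CL)
    (x x' : ℝ → Fin N → ℝ)
    (hmem : ∀ᵐ t ∂volume, 0 ≤ t →
      x' t ∈ (fun v => -(L.mulVec v)) '' kras (fun y i => qd Δ (y i)) (x t))
    (hderiv : ∀ᵐ t ∂volume, 0 ≤ t → HasDerivAt x (x' t) t)
    (hint : ∀ t, 0 ≤ t → IntervalIntegrable x' volume 0 t)
    (hsol : ∀ t, 0 ≤ t → x t = x 0 + ∫ s in (0 : ℝ)..t, x' s)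
    (y : ℝ → Fin N → ℝ)
    (hy : ∀ t, y t = fun i => x t i - (∑ j, x t j) / N) :
    (∃ W : ℝ → ℝ, ∀ᵐ t ∂volume, 0 ≤ t →
      HasDerivAt (fun s => (1 / 2) * ∑ i, (y s i) ^ 2) (W t) t ∧
      W t ≤ -(lam2 * en (y t) * (en (y t) - CL / lam2 * (Δ / 2) * Real.sqrt N))) ∧
    (∀ ε > (0 : ℝ), ∃ T : ℝ, ∀ t, T ≤ t →
      en (fun i => x t i - (∑ j, x 0 j) / N) / Real.sqrt N
        ≤ CL / lam2 * (Δ / 2) + ε) := by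
  classical
  -- basic positivity facts
  have hN : 0 < N := by
    rcases Nat.eq_zero_or_pos N with h0 | h; swap; · exact h
    obtain ⟨_, v, hv0, _⟩ := hlam.1
    exact absurd (funext fun i => absurd i.2 (by omega)) hv0
  have hNR : (0:ℝ) < N := by exact_mod_cast hN
  have hsN : (0:ℝ) < Real.sqrt N := Real.sqrt_pos.2 hNR
  have hCL0 : 0 ≤ CL := hCL.1.1
  have hherm : S.IsHermitian := S_hermitian L S hS
  have hlam2pos : 0 < lam2 := by
    obtain ⟨⟨hl2ne, v2, hv2ne, hv2eig⟩, _⟩ := hlam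
    have h1 : ∑ i, v2 i * (S.mulVec v2) i = lam2 * ∑ i, v2 i ^ 2 := by
      rw [hv2eig, Finset.mul_sum]
      exact Finset.sum_congr rfl fun i _ => by
        show v2 i * (lam2 * v2 i) = _ ; ring
    have h2 : ∑ i, v2 i * (S.mulVec v2) i
        = (1/2) * ∑ i, ∑ j, A i j * (v2 i - v2 j)^2 := by
      rw [sym_form L S hS, quad_form A hbal L hL]
    have h3 : 0 ≤ ∑ i, ∑ j, A i j * (v2 i - v2 j)^2 :=
      Finset.sum_nonneg fun i _ => Finset.sum_nonneg fun j _ =>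
        mul_nonneg (hA i j) (sq_nonneg _)
    have h4 : 0 < ∑ i, v2 i ^ 2 := by
      obtain ⟨i, hi⟩ := Function.ne_iff.1 hv2ne
      refine Finset.sum_pos' (fun j _ => sq_nonneg _) ⟨i, Finset.mem_univ i, ?_⟩
      have : v2 i ≠ 0 := hi
      positivity
    have : 0 ≤ lam2 * ∑ i, v2 i ^ 2 := by rw [← h1, h2]; linarith
    rcases lt_trichotomy lam2 0 with hlt | heq | hgt
    · nlinarith
    · exact absurd heq hl2ne
    · exact hgt
  have hrow : ∀ i, ∑ j, L i j = 0 := by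
    intro i
    rw [hL]
    simp only [Matrix.sub_apply, Finset.sum_sub_distrib, Matrix.diagonal_apply]
    rw [Finset.sum_ite_eq Finset.univ i fun _ => ∑ j, A i j]
    simp
  have hcol : ∀ j, ∑ i, L i j = 0 := by
    intro j
    rw [hL]
    simp only [Matrix.sub_apply, Finset.sum_sub_distrib, Matrix.diagonal_apply]
    rw [show ∑ i, (if i = j then ∑ k, A i k else 0) = ∑ k, A j k from by
      rw [Finset.sum_ite_eq' Finset.univ j fun i => ∑ k, A i k]; simp]
    rw [hbal j]
    simp
  have hysum : ∀ t, ∑ i, y t i = 0 := by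
    intro t
    rw [hy]
    rw [Finset.sum_sub_distrib, Finset.sum_const, Finset.card_univ, Fintype.card_fin,
      nsmul_eq_mul]
    field_simp
    ring
  -- the candidate derivative
  set W : ℝ → ℝ := fun t => ∑ i, y t i * (x' t i - (∑ j, x' t j) / N) with hW
  -- a.e. bound on W
  have hbound : ∀ᵐ t ∂volume, 0 ≤ t →
      W t ≤ -(lam2 * en (y t) * (en (y t) - CL / lam2 * (Δ / 2) * Real.sqrt N)) := by
    filter_upwards [hmem] with t hmemt ht
    obtain ⟨v, hvk, hvx⟩ := hmemt ht
    set w : Fin N → ℝ := fun i => v i - x t i with hw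
    have hwen : en w ≤ Real.sqrt N * (Δ / 2) := kras_close hΔ (x t) hvk
    have step1 : W t = ∑ i, y t i * x' t i := by
      rw [hW]
      simp only
      rw [show ∑ i, y t i * (x' t i - (∑ j, x' t j) / N)
          = ∑ i, y t i * x' t i - ((∑ j, x' t j) / N) * ∑ i, y t i from by
        rw [Finset.mul_sum, ← Finset.sum_sub_distrib]
        exact Finset.sum_congr rfl fun i _ => by ring]
      rw [hysum t, mul_zero, sub_zero]
    have step2 : ∑ i, y t i * x' t i = -∑ i, y t i * (L.mulVec v) i := by
      rw [← hvx, ← Finset.sum_neg_distrib]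
      exact Finset.sum_congr rfl fun i _ => by
        show y t i * (-(L.mulVec v)) i = -(y t i * (L.mulVec v) i)
        simp
    have hdec : L.mulVec v = L.mulVec w + L.mulVec (y t) := by
      have hvdec : v = w + (y t + fun _ => (∑ j, x t j) / N) := by
        funext i
        simp only [hw, Pi.add_apply, hy]
        ring
      rw [hvdec, Matrix.mulVec_add, Matrix.mulVec_add]
      have hconst : L.mulVec (fun _ => (∑ j, x t j) / N) = 0 := by
        funext i
        show ∑ j, L i j * ((∑ j, x t j) / N) = 0
        rw [← Finset.sum_mul, hrow i, zero_mul]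
      rw [hconst, add_zero]
    have step3 : ∑ i, y t i * (L.mulVec v) i
        = ∑ i, y t i * (L.mulVec w) i + ∑ i, y t i * (L.mulVec (y t)) i := by
      rw [hdec, ← Finset.sum_add_distrib]
      exact Finset.sum_congr rfl fun i _ => by
        show y t i * ((L.mulVec w) i + (L.mulVec (y t)) i) = _
        ring
    have step4 : lam2 * ∑ i, y t i ^ 2 ≤ ∑ i, y t i * (L.mulVec (y t)) i := by
      rw [← sym_form L S hS]
      exact spec_bound hN S hherm lam2
        (fun μ hμ hex => hlam.2 ⟨hμ, hex⟩)
        (fun u hu => ker_const A hA hbal hconn L hL S hS u hu)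
        (y t) (hysum t)
    have step5 : |∑ i, y t i * (L.mulVec w) i| ≤ en (y t) * (CL * (Real.sqrt N * (Δ / 2))) := by
      calc |∑ i, y t i * (L.mulVec w) i| ≤ en (y t) * en (L.mulVec w) := en_CS _ _
        _ ≤ en (y t) * (CL * (Real.sqrt N * (Δ / 2))) := by
            refine mul_le_mul_of_nonneg_left ?_ (en_nonneg _)
            calc en (L.mulVec w) ≤ CL * en w := hCL.1.2 w
              _ ≤ CL * (Real.sqrt N * (Δ / 2)) := mul_le_mul_of_nonneg_left hwen hCL0
    have hsq : en (y t) ^ 2 = ∑ i, y t i ^ 2 := en_sq _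
    have hrw : lam2 * (CL / lam2 * (Δ / 2) * Real.sqrt N) = CL * (Δ / 2) * Real.sqrt N := by
      field_simp
    have habs := abs_le.1 step5
    rw [step1, step2, step3]
    have hen0 := en_nonneg (y t)
    nlinarith [habs.1, habs.2]
  -- a.e. derivative
  have hWd : ∀ᵐ t ∂volume, 0 ≤ t →
      HasDerivAt (fun s => (1 / 2 : ℝ) * ∑ i, (y s i) ^ 2) (W t) t := by
    filter_upwards [hderiv] with t hd ht
    have hdx := hd ht
    have hdi : ∀ i, HasDerivAt (fun s => x s i) (x' t i) t := fun i =>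
      (hasDerivAt_pi.1 hdx) i
    have hsumx : HasDerivAt (fun s => ∑ j, x s j) (∑ j, x' t j) t :=
      HasDerivAt.fun_sum fun j _ => hdi j
    have hyi : ∀ i, HasDerivAt (fun s => y s i) (x' t i - (∑ j, x' t j) / N) t := by
      intro i
      simp only [hy]
      exact (hdi i).sub (hsumx.div_const N)
    have H := ((HasDerivAt.fun_sum (fun i (_ : i ∈ Finset.univ) => (hyi i).pow 2)).const_mul
      ((1:ℝ)/2))
    refine H.congr_deriv (Eq.symm ?_)
    rw [hW, Finset.mul_sum]
    exact Finset.sum_congr rfl fun i _ => by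
      rw [pow_one]
      ring
  refine ⟨⟨W, by filter_upwards [hWd, hbound] with t h1 h2 ht; exact ⟨h1 ht, h2 ht⟩⟩, ?_⟩
    -- PART 2
  intro ε hε
  have hintc : ∀ (i : Fin N) (t : ℝ), 0 ≤ t → IntervalIntegrable (fun s => x' s i) volume 0 t := by
    intro i t ht
    have h1 := hint t ht
    exact ⟨(ContinuousLinearMap.proj (R := ℝ) (φ := fun _ : Fin N => ℝ) i).integrable_comp h1.1,
      (ContinuousLinearMap.proj (R := ℝ) (φ := fun _ : Fin N => ℝ) i).integrable_comp h1.2⟩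
  have hxi : ∀ (i : Fin N) (t : ℝ), 0 ≤ t → x t i = x 0 i + ∫ s in (0:ℝ)..t, x' s i := by
    intro i t ht
    have h := congrFun (hsol t ht) i
    rw [h]
    show x 0 i + (∫ s in (0:ℝ)..t, x' s) i = _
    congr 1
    have hc := (ContinuousLinearMap.proj (R := ℝ) (φ := fun _ : Fin N => ℝ)
      i).intervalIntegral_comp_comm (hint t ht)
    exact hc.symm
  have hsumint : ∀ (t : ℝ), 0 ≤ t → IntervalIntegrable (fun s => ∑ j, x' s j) volume 0 t := by
    intro t ht
    exact ⟨integrable_finset_sum _ (fun j _ => (hintc j t ht).1),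
      integrable_finset_sum _ (fun j _ => (hintc j t ht).2)⟩
  have hxs : ∀ (t : ℝ), 0 ≤ t →
      ∑ j, x t j = ∑ j, x 0 j + ∫ s in (0:ℝ)..t, ∑ j, x' s j := by
    intro t ht
    rw [show ∑ j, x t j = ∑ j, (x 0 j + ∫ s in (0:ℝ)..t, x' s j) from
      Finset.sum_congr rfl fun j _ => hxi j t ht]
    rw [Finset.sum_add_distrib]
    congr 1
    exact (intervalIntegral.integral_finset_sum (fun j _ => hintc j t ht)).symm
  set g : Fin N → ℝ → ℝ := fun i s => x' s i - (∑ j, x' s j) / N with hg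
  have hgint : ∀ (i : Fin N) (t : ℝ), 0 ≤ t → IntervalIntegrable (g i) volume 0 t := fun i t ht =>
    (hintc i t ht).sub ((hsumint t ht).div_const N)
  have hgIoc : ∀ (i : Fin N) (t : ℝ), 0 ≤ t → IntegrableOn (g i) (Set.Ioc 0 t) := fun i t ht =>
    (intervalIntegrable_iff_integrableOn_Ioc_of_le ht).1 (hgint i t ht)
  have hyprim : ∀ (i : Fin N) (t : ℝ), 0 ≤ t → y t i = y 0 i + ∫ s in Set.Ioc 0 t, g i s := by
    intro i t ht
    have hsplit : (∫ s in Set.Ioc 0 t, g i s)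
        = (∫ s in Set.Ioc 0 t, x' s i) - (∫ s in Set.Ioc 0 t, ∑ j, x' s j) / N := by
      rw [← integral_div, ← integral_sub
        ((intervalIntegrable_iff_integrableOn_Ioc_of_le ht).1 (hintc i t ht))
        (((intervalIntegrable_iff_integrableOn_Ioc_of_le ht).1 (hsumint t ht)).div_const _)]
    simp only [hy]
    rw [hxi i t ht, hxs t ht, hsplit,
      ← intervalIntegral.integral_of_le ht, ← intervalIntegral.integral_of_le ht]
    ring
  set V : ℝ → ℝ := fun t => (1/2 : ℝ) * ∑ i, (y t i)^2 with hV
  have hycont : ∀ (i : Fin N) (M : ℝ), 0 ≤ M → ContinuousOn (fun s => y s i) (Set.Icc 0 M) := by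
    intro i M hM
    have hFcont : ContinuousOn (fun s => ∫ u in Set.Ioc 0 s, g i u) (Set.Icc 0 M) :=
      intervalIntegral.continuousOn_primitive
        ((integrableOn_Icc_iff_integrableOn_Ioc).2 (hgIoc i M hM))
    exact (continuousOn_const.add hFcont).congr (fun s hs => hyprim i s hs.1)
  have hprodint : ∀ (i : Fin N) (M : ℝ), 0 ≤ M →
      IntegrableOn (fun s => g i s * y s i) (Set.Ioc 0 M) := by
    intro i M hM
    have h1 : IntegrableOn (g i) (Set.Icc 0 M) :=
      (integrableOn_Icc_iff_integrableOn_Ioc).2 (hgIoc i M hM)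
    have := h1.mul_continuousOn (hycont i M hM) isCompact_Icc
    exact this.mono_set Set.Ioc_subset_Icc_self
  have hWg : ∀ s : ℝ, W s = ∑ i, g i s * y s i := by
    intro s
    exact Finset.sum_congr rfl fun i _ => by rw [hg]; ring
  have hWint : ∀ (M : ℝ), 0 ≤ M → IntegrableOn W (Set.Ioc 0 M) := by
    intro M hM
    have h := integrable_finset_sum (μ := volume.restrict (Set.Ioc 0 M)) Finset.univ
      (fun i (_ : i ∈ Finset.univ) => hprodint i M hM)
    exact h.congr (Filter.Eventually.of_forall fun s => (hWg s).symm)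
  have hVid : ∀ (t : ℝ), 0 ≤ t → V t = V 0 + ∫ s in Set.Ioc 0 t, W s := by
    intro t ht
    have hper : ∀ i : Fin N, (y t i)^2
        = (y 0 i)^2 + 2 * ∫ s in Set.Ioc 0 t, g i s * y s i := by
      intro i
      have hp := primitive_sq (y 0 i) (g i) (fun u hu => hgIoc i u hu) ht
      rw [← hyprim i t ht] at hp
      rw [hp]
      congr 2
      refine setIntegral_congr_fun measurableSet_Ioc fun s hs => ?_
      rw [← hyprim i s (le_of_lt hs.1)]
    show (1/2 : ℝ) * ∑ i, (y t i)^2 = (1/2 : ℝ) * ∑ i, (y 0 i)^2 + _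
    rw [show ∑ i, (y t i)^2
        = ∑ i, ((y 0 i)^2 + 2 * ∫ s in Set.Ioc 0 t, g i s * y s i) from
      Finset.sum_congr rfl fun i _ => hper i]
    rw [Finset.sum_add_distrib]
    have hsum2 : ∑ i : Fin N, 2 * ∫ s in Set.Ioc 0 t, g i s * y s i
        = 2 * ∫ s in Set.Ioc 0 t, W s := by
      rw [← Finset.mul_sum]
      congr 1
      rw [← integral_finset_sum Finset.univ (fun i _ => hprodint i t ht)]
      exact integral_congr_ae (Filter.Eventually.of_forall fun s => (hWg s).symm)
    rw [hsum2]
    ring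
  have hVcont : ∀ (M : ℝ), 0 ≤ M → ContinuousOn V (Set.Icc 0 M) := by
    intro M hM
    have hFcont := intervalIntegral.continuousOn_primitive
      ((integrableOn_Icc_iff_integrableOn_Ioc).2 (hWint M hM))
    exact (continuousOn_const.add hFcont).congr (fun s hs => hVid s hs.1)
  have hVdiff : ∀ (a t : ℝ), 0 ≤ a → a ≤ t → V t = V a + ∫ s in Set.Ioc a t, W s := by
    intro a t ha hat
    rw [hVid t (ha.trans hat), hVid a ha]
    have hIoc : Set.Ioc 0 t = Set.Ioc 0 a ∪ Set.Ioc a t :=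
      (Set.Ioc_union_Ioc_eq_Ioc ha hat).symm
    rw [hIoc, setIntegral_union (Set.Ioc_disjoint_Ioc_of_le le_rfl) measurableSet_Ioc
      (hWint a ha) ((hWint t (ha.trans hat)).mono_set (Set.Ioc_subset_Ioc_left ha))]
    ring
  set r : ℝ := CL / lam2 * (Δ / 2) with hr
  have hr0 : 0 ≤ r := by
    rw [hr]; positivity
  set b : ℝ := (r + ε) * Real.sqrt N with hb
  have hb0 : 0 < b := mul_pos (by linarith) hsN
  set lev : ℝ := b^2/2 with hlev
  set κ : ℝ := lam2 * b * (ε * Real.sqrt N) with hκ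
  have hκ0 : 0 < κ := mul_pos (mul_pos hlam2pos hb0) (mul_pos hε hsN)
  have hVsq : ∀ s : ℝ, en (y s)^2 = 2 * V s := by
    intro s
    rw [en_sq]
    show _ = 2 * ((1/2 : ℝ) * ∑ i, (y s i)^2)
    ring
  have hBle : ∀ s : ℝ, lev < V s →
      -(lam2 * en (y s) * (en (y s) - CL / lam2 * (Δ / 2) * Real.sqrt N)) ≤ -κ := by
    intro s hVs
    have he2 := hVsq s
    have hen0 := en_nonneg (y s)
    have heb : b ≤ en (y s) := by nlinarith
    have hrs : CL / lam2 * (Δ / 2) * Real.sqrt N = r * Real.sqrt N := by rw [hr]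
    rw [hrs]
    have hbe : b = r * Real.sqrt N + ε * Real.sqrt N := by rw [hb]; ring
    have h1 : ε * Real.sqrt N ≤ en (y s) - r * Real.sqrt N := by linarith
    have h2 : lam2 * b ≤ lam2 * en (y s) := by nlinarith
    have h3 : (lam2 * b) * (ε * Real.sqrt N)
        ≤ (lam2 * en (y s)) * (en (y s) - r * Real.sqrt N) :=
      mul_le_mul h2 h1 (mul_nonneg hε.le hsN.le) (mul_nonneg hlam2pos.le hen0)
    have hκe : κ = lam2 * b * (ε * Real.sqrt N) := hκ
    nlinarith [h3]
  have hdecay : ∀ (a t : ℝ), 0 ≤ a → a ≤ t → (∀ s, s ∈ Set.Ioc a t → lev < V s) →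
      V t ≤ V a - κ * (t - a) := by
    intro a t ha hat hgt
    have hVd := hVdiff a t ha hat
    have hle : ∫ s in Set.Ioc a t, W s ≤ ∫ _s in Set.Ioc a t, (-κ) := by
      refine setIntegral_mono_ae_restrict
        ((hWint t (ha.trans hat)).mono_set (Set.Ioc_subset_Ioc_left ha))
        (integrableOn_const (by simp [Real.volume_Ioc]))
        ?_
      filter_upwards [ae_restrict_of_ae hbound, ae_restrict_mem measurableSet_Ioc] with s h1 h2
      exact (h1 (le_of_lt (lt_of_le_of_lt ha h2.1))).trans (hBle s (hgt s h2))
    rw [setIntegral_const, Real.volume_real_Ioc, max_eq_left (by linarith), smul_eq_mul] at hle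
    nlinarith [hle, hVd]
  have hexit : ∀ a : ℝ, 0 ≤ a → ∃ T, 0 ≤ T ∧ V T ≤ lev := by
    intro a ha
    by_contra hno
    push_neg at hno
    set D : ℝ := max 1 ((V a - lev)/κ + 1) with hD
    have hD1 : (1:ℝ) ≤ D := le_max_left _ _
    have hD2 : (V a - lev)/κ + 1 ≤ D := le_max_right _ _
    have hgt : ∀ s, s ∈ Set.Ioc a (a + D) → lev < V s := by
      intro s hs
      exact hno s (le_trans ha (le_of_lt hs.1))
    have hdec := hdecay a (a + D) ha (by linarith) hgt
    have hVgt := hno (a + D) (by linarith)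
    have hκD : V a - lev + κ ≤ κ * D := by
      have := mul_le_mul_of_nonneg_left hD2 (le_of_lt hκ0)
      rw [mul_add, mul_one, mul_div_cancel₀ _ (ne_of_gt hκ0)] at this
      linarith
    nlinarith
  have hstay : ∀ (T t : ℝ), 0 ≤ T → V T ≤ lev → T ≤ t → V t ≤ lev := by
    intro T t hT hVT hTt
    by_contra hgt
    push_neg at hgt
    set K : Set ℝ := {s | s ∈ Set.Icc T t ∧ V s ≤ lev} with hK
    have hKne : K.Nonempty := ⟨T, Set.left_mem_Icc.2 hTt, hVT⟩
    have hKbdd : BddAbove K := (bddAbove_Icc).mono (fun s hs => hs.1)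
    have hclosed : IsClosed K := by
      have hc : ContinuousOn V (Set.Icc T t) :=
        (hVcont t (hT.trans hTt)).mono (Set.Icc_subset_Icc hT le_rfl)
      have : K = Set.Icc T t ∩ V ⁻¹' Set.Iic lev := rfl
      rw [this]
      exact hc.preimage_isClosed_of_isClosed isClosed_Icc isClosed_Iic
    have hKcomp : IsCompact K :=
      isCompact_Icc.of_isClosed_subset hclosed (fun s hs => hs.1)
    have hs0mem : sSup K ∈ K := hKcomp.sSup_mem hKne
    obtain ⟨⟨hs0T, hs0t⟩, hVs0⟩ := hs0mem
    have hs0lt : sSup K < t := lt_of_le_of_ne hs0t (fun h => by rw [h] at hVs0; linarith)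
    have hgtIoc : ∀ s, s ∈ Set.Ioc (sSup K) t → lev < V s := by
      intro s hs
      by_contra hle
      push_neg at hle
      have hsK : s ∈ K := ⟨⟨hs0T.trans (le_of_lt hs.1), hs.2⟩, hle⟩
      have := le_csSup hKbdd hsK
      linarith [hs.1]
    have hdec := hdecay (sSup K) t (hT.trans hs0T) (le_of_lt hs0lt) hgtIoc
    nlinarith
  have hconsv : ∀ t : ℝ, 0 ≤ t → ∑ j, x t j = ∑ j, x 0 j := by
    intro t ht
    have hzero : ∫ s in (0:ℝ)..t, ∑ j, x' s j = 0 := by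
      rw [intervalIntegral.integral_of_le ht]
      have hae : ∀ᵐ s ∂(volume.restrict (Set.Ioc 0 t)), (∑ j, x' s j) = 0 := by
        filter_upwards [ae_restrict_of_ae hmem, ae_restrict_mem measurableSet_Ioc] with s h1 h2
        obtain ⟨v, hvk, hvx⟩ := h1 (le_of_lt h2.1)
        rw [← hvx]
        show ∑ j, (-(L.mulVec v)) j = 0
        rw [show ∑ j, (-(L.mulVec v)) j = -∑ j, ∑ k, L j k * v k from by
          rw [← Finset.sum_neg_distrib]
          exact Finset.sum_congr rfl fun j _ => by
            show (-(L.mulVec v)) j = _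
            simp [Matrix.mulVec, dotProduct]]
        rw [Finset.sum_comm]
        rw [show ∑ k, ∑ j, L j k * v k = ∑ k : Fin N, (0:ℝ) from
          Finset.sum_congr rfl fun k _ => by rw [← Finset.sum_mul, hcol k, zero_mul]]
        simp
      rw [integral_congr_ae hae]
      simp
    rw [hxs t ht, hzero, add_zero]
  obtain ⟨T0, hT00, hVT0⟩ := hexit 0 le_rfl
  refine ⟨T0, fun t hTt => ?_⟩
  have ht0 : 0 ≤ t := hT00.trans hTt
  have hVt : V t ≤ lev := hstay T0 t hT00 hVT0 hTt
  have hxy : (fun i => x t i - (∑ j, x 0 j)/(N:ℝ)) = y t := by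
    rw [hy]
    funext i
    rw [hconsv t ht0]
  rw [hxy]
  have he2 := hVsq t
  have hen0 := en_nonneg (y t)
  have heb : en (y t) ≤ b := by nlinarith
  calc en (y t) / Real.sqrt N ≤ b / Real.sqrt N := by
        gcongr
    _ = r + ε := by rw [hb]; field_simp
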